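/- arXiv:1301.4763 — 5 statements merged into one kernel-verified Lean document; each statement's English description precedes it below -/
import Mathlib

section
/- Let Σ be a finite set with at least two elements, μ a probability vector, ℓ : Σ → ℝ≥0, R ∈ [0,2]. Assume there exist distinct x⁰ achieving max_i ℓ_i and x₀ achieving min_i ℓ_i with μ(x⁰) + R/2 ≤ 1 and μ(x₀) ≥ R/2. Then sup{∑_i ℓ_i ν_i : ν probability vector, ∑_i |ν_i−μ_i| ≤ R} = ∑_i ℓ_i μ_i + (R/2)(max_i ℓ_i − min_i ℓ_i). -/
lemma max_sub_aux (a : ℝ) : a = max a 0 - max (-a) 0 := by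
  rcases le_total a 0 with h | h
  · rw [max_eq_right h, max_eq_left (neg_nonneg.mpr h)]; ring
  · rw [max_eq_left h, max_eq_right (neg_nonpos.mpr h)]; ring

lemma abs_max_aux (a : ℝ) : |a| = max a 0 + max (-a) 0 := by
  rcases le_total a 0 with h | h
  · rw [abs_of_nonpos h, max_eq_right h, max_eq_left (neg_nonneg.mpr h)]; ring
  · rw [abs_of_nonneg h, max_eq_left h, max_eq_right (neg_nonpos.mpr h)]; ring

theorem stmt_6 {S : Type*} [Fintype S] [Nonempty S]
    (μ : S → ℝ) (hμ0 : ∀ i, 0 ≤ μ i) (hμ1 : ∑ i, μ i = 1)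
    (ℓ : S → ℝ) (hℓ : ∀ i, 0 ≤ ℓ i)
    (R : ℝ) (hR : R ∈ Set.Icc (0:ℝ) 2)
    (x0 x1 : S) (hne : x1 ≠ x0)
    (hmax : ℓ x1 = ⨆ i, ℓ i) (hmin : ℓ x0 = ⨅ i, ℓ i)
    (h1 : μ x1 + R / 2 ≤ 1) (h0 : R / 2 ≤ μ x0) :
    sSup {y : ℝ | ∃ ν : S → ℝ, (∀ i, 0 ≤ ν i) ∧ (∑ i, ν i = 1) ∧
        (∑ i, |ν i - μ i|) ≤ R ∧ y = ∑ i, ℓ i * ν i} =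
      ∑ i, ℓ i * μ i + (R / 2) * ((⨆ i, ℓ i) - ⨅ i, ℓ i) := by
  classical
  obtain ⟨hR0, hR2⟩ := hR
  have hBddA : BddAbove (Set.range ℓ) := (Set.finite_range ℓ).bddAbove
  have hBddB : BddBelow (Set.range ℓ) := (Set.finite_range ℓ).bddBelow
  have hM : ∀ i, ℓ i ≤ ⨆ i, ℓ i := fun i => le_ciSup hBddA i
  have hm : ∀ i, (⨅ i, ℓ i) ≤ ℓ i := fun i => ciInf_le hBddB i
  have hMm : (⨅ i, ℓ i) ≤ ⨆ i, ℓ i := (hm x1).trans (hM x1)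
  set M := ⨆ i, ℓ i with hMdef
  set m := ⨅ i, ℓ i with hmdef
  have key : ∀ ν : S → ℝ, (∀ i, 0 ≤ ν i) → (∑ i, ν i = 1) →
      (∑ i, |ν i - μ i|) ≤ R →
      ∑ i, ℓ i * ν i ≤ ∑ i, ℓ i * μ i + (R / 2) * (M - m) := by
    intro ν hν0 hν1 hTV
    set d : S → ℝ := fun i => ν i - μ i with hd
    have hdsum : ∑ i, d i = 0 := by simp [hd, Finset.sum_sub_distrib, hν1, hμ1]
    set P := ∑ i, max (d i) 0 with hP
    set N := ∑ i, max (-(d i)) 0 with hN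
    have hPN : P - N = 0 := by
      calc P - N = ∑ i, (max (d i) 0 - max (-(d i)) 0) := by
            rw [hP, hN, ← Finset.sum_sub_distrib]
        _ = ∑ i, d i := Finset.sum_congr rfl fun i _ => (max_sub_aux (d i)).symm
        _ = 0 := hdsum
    have hPN2 : P + N ≤ R := by
      calc P + N = ∑ i, (max (d i) 0 + max (-(d i)) 0) := by
            rw [hP, hN, ← Finset.sum_add_distrib]
        _ = ∑ i, |d i| := Finset.sum_congr rfl fun i _ => (abs_max_aux (d i)).symm
        _ ≤ R := hTV
    have hPle : P ≤ R / 2 := by linarith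
    have hP0 : 0 ≤ P := Finset.sum_nonneg fun i _ => le_max_right _ _
    have hup : ∑ i, ℓ i * max (d i) 0 ≤ M * P := by
      rw [hP, Finset.mul_sum]
      exact Finset.sum_le_sum fun i _ =>
        mul_le_mul_of_nonneg_right (hM i) (le_max_right _ _)
    have hlo : m * N ≤ ∑ i, ℓ i * max (-(d i)) 0 := by
      rw [hN, Finset.mul_sum]
      exact Finset.sum_le_sum fun i _ =>
        mul_le_mul_of_nonneg_right (hm i) (le_max_right _ _)
    have hsplit : ∑ i, ℓ i * ν i = ∑ i, ℓ i * μ i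
        + (∑ i, ℓ i * max (d i) 0 - ∑ i, ℓ i * max (-(d i)) 0) := by
      rw [← Finset.sum_sub_distrib, ← Finset.sum_add_distrib]
      refine Finset.sum_congr rfl fun i _ => ?_
      have hdi : ν i = μ i + d i := by simp [hd]
      rw [hdi, mul_add]
      congr 1
      rw [← mul_sub, ← max_sub_aux (d i)]
    rw [hsplit]
    have hN' : N = P := by linarith
    have hq : M * P - m * P = P * (M - m) := by ring
    have hq2 : P * (M - m) ≤ (R/2) * (M - m) :=
      mul_le_mul_of_nonneg_right hPle (sub_nonneg.mpr hMm)
    rw [hN'] at hlo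
    linarith
  apply le_antisymm
  · apply csSup_le
    · exact ⟨∑ i, ℓ i * μ i, μ, hμ0, hμ1, by simp [hR0], rfl⟩
    · rintro y ⟨ν, hν0, hν1, hTV, rfl⟩
      exact key ν hν0 hν1 hTV
  · apply le_csSup
    · exact ⟨∑ i, ℓ i * μ i + (R / 2) * (M - m), by
        rintro y ⟨ν, hν0, hν1, hTV, rfl⟩; exact key ν hν0 hν1 hTV⟩
    · refine ⟨fun i => μ i + (if i = x1 then R/2 else 0) - (if i = x0 then R/2 else 0),
        ?_, ?_, ?_, ?_⟩
      · intro i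
        dsimp only
        by_cases hA : i = x1
        · subst hA; rw [if_pos rfl, if_neg hne]; have := hμ0 i; linarith
        · by_cases hB : i = x0
          · subst hB; rw [if_neg hA, if_pos rfl]; linarith
          · rw [if_neg hA, if_neg hB]; simpa using hμ0 i
      · rw [Finset.sum_sub_distrib, Finset.sum_add_distrib, hμ1]
        simp [Finset.sum_ite_eq']
      · have keyTV : ∀ i : S, |(μ i + (if i = x1 then R/2 else 0)
            - (if i = x0 then R/2 else 0)) - μ i|
            = (if i = x1 then R/2 else 0) + (if i = x0 then R/2 else 0) := by
          intro i
          by_cases hA : i = x1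
          · subst hA
            rw [if_pos rfl, if_neg hne]
            have h : μ i + R/2 - 0 - μ i = R/2 := by ring
            rw [h, abs_of_nonneg (by linarith : (0:ℝ) ≤ R/2)]
            ring
          · by_cases hB : i = x0
            · subst hB
              rw [if_neg hA, if_pos rfl]
              have h : μ i + 0 - R/2 - μ i = -(R/2) := by ring
              rw [h, abs_neg, abs_of_nonneg (by linarith : (0:ℝ) ≤ R/2)]
              ring
            · rw [if_neg hA, if_neg hB]
              simp
        calc ∑ i, |(μ i + (if i = x1 then R/2 else 0) - (if i = x0 then R/2 else 0)) - μ i|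
            = ∑ i, ((if i = x1 then R/2 else 0) + (if i = x0 then R/2 else 0)) :=
              Finset.sum_congr rfl fun i _ => keyTV i
          _ = R := by rw [Finset.sum_add_distrib]; simp [Finset.sum_ite_eq']
          _ ≤ R := le_rfl
      · have hterm : ∀ i : S, ℓ i * (μ i + (if i = x1 then R/2 else 0)
            - (if i = x0 then R/2 else 0))
            = ℓ i * μ i + (if i = x1 then ℓ i * (R/2) else 0)
              - (if i = x0 then ℓ i * (R/2) else 0) := by
          intro i; split_ifs <;> ring
        rw [Finset.sum_congr rfl fun i _ => hterm i, Finset.sum_sub_distrib,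
          Finset.sum_add_distrib]
        simp only [Finset.sum_ite_eq', Finset.mem_univ, if_pos]
        rw [hmax, hmin]
        ring
end

section
/- Let Σ be a finite set, μ, ν probability vectors, ℓ : Σ → ℝ≥0, ξ⁻_i = max(μ_i − ν_i, 0), and let Σ₀ = {i : ℓ_i = min_j ℓ_j}. Let ℓ(Σ₁) = min{ℓ_i : i ∉ Σ₀} (assuming Σ ≠ Σ₀). If ∑_i ξ_i⁻ = α/2 and ∑_{i∈Σ₀} ξ_i⁻ ≤ ∑_{i∈Σ₀} μ_i ≤ α/2, then ∑_i ℓ_i ξ_i⁻ ≥ ℓ(Σ₁)·(α/2 − ∑_{i∈Σ₀} μ_i) + (min_j ℓ_j)·∑_{i∈Σ₀} μ_i. -/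
theorem stmt_13 {S : Type*} [Fintype S] [Nonempty S]
    (μ ν : S → ℝ) (hμ0 : ∀ i, 0 ≤ μ i) (hμ1 : ∑ i, μ i = 1)
    (hν0 : ∀ i, 0 ≤ ν i) (hν1 : ∑ i, ν i = 1)
    (ℓ : S → ℝ) (hℓ : ∀ i, 0 ≤ ℓ i)
    (hS1 : (Finset.univ.filter (fun i => ℓ i ≠ ⨅ j, ℓ j)).Nonempty)
    (α : ℝ)
    (hsum : ∑ i, max (μ i - ν i) 0 = α / 2)
    (hle : ∑ i ∈ Finset.univ.filter (fun i => ℓ i = ⨅ j, ℓ j), max (μ i - ν i) 0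
        ≤ ∑ i ∈ Finset.univ.filter (fun i => ℓ i = ⨅ j, ℓ j), μ i)
    (hle2 : ∑ i ∈ Finset.univ.filter (fun i => ℓ i = ⨅ j, ℓ j), μ i ≤ α / 2) :
    (Finset.univ.filter (fun i => ℓ i ≠ ⨅ j, ℓ j)).inf' hS1 ℓ *
        (α / 2 - ∑ i ∈ Finset.univ.filter (fun i => ℓ i = ⨅ j, ℓ j), μ i) +
      (⨅ j, ℓ j) * ∑ i ∈ Finset.univ.filter (fun i => ℓ i = ⨅ j, ℓ j), μ i ≤
    ∑ i, ℓ i * max (μ i - ν i) 0 := by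
  set m := ⨅ j, ℓ j with hm
  set A := Finset.univ.filter (fun i => ℓ i = m) with hA
  set B := Finset.univ.filter (fun i => ℓ i ≠ m) with hB
  set ξ : S → ℝ := fun i => max (μ i - ν i) 0 with hξ
  have hξ0 : ∀ i, 0 ≤ ξ i := fun i => le_max_right _ _
  have hmle : ∀ i, m ≤ ℓ i := fun i =>
    ciInf_le (Set.Finite.bddBelow (Set.finite_range ℓ)) i
  set M := B.inf' hS1 ℓ with hM
  have hmM : m ≤ M := Finset.le_inf' _ _ (fun i _ => hmle i)
  have hsplit : ∑ i ∈ A, ξ i + ∑ i ∈ B, ξ i = α / 2 := by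
    rw [← hsum]; exact Finset.sum_filter_add_sum_filter_not _ _ _
  have h1 : m * ∑ i ∈ A, ξ i ≤ ∑ i ∈ A, ℓ i * ξ i := by
    rw [Finset.mul_sum]
    exact Finset.sum_le_sum (fun i _ => mul_le_mul_of_nonneg_right (hmle i) (hξ0 i))
  have h2 : M * ∑ i ∈ B, ξ i ≤ ∑ i ∈ B, ℓ i * ξ i := by
    rw [Finset.mul_sum]
    exact Finset.sum_le_sum (fun i hi => mul_le_mul_of_nonneg_right (Finset.inf'_le _ hi) (hξ0 i))
  have htot : ∑ i ∈ A, ℓ i * ξ i + ∑ i ∈ B, ℓ i * ξ i = ∑ i, ℓ i * ξ i :=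
    Finset.sum_filter_add_sum_filter_not _ _ _
  have htot2 : ∑ i ∈ A, ℓ i * ξ i + ∑ i ∈ B, ℓ i * ξ i = ∑ i : S, ℓ i * max (μ i - ν i) 0 := htot
  have hsB : ∑ i ∈ B, ξ i = α / 2 - ∑ i ∈ A, ξ i := by linarith
  rw [hsB] at h2
  rw [← hm]
  nlinarith [mul_nonneg (sub_nonneg.mpr hmM) (sub_nonneg.mpr hle)]
end

section
/- Let Σ be a finite set, μ a probability vector, ℓ : Σ → ℝ≥0 non-constant, and D a real number with min_i ℓ_i ≤ D ≤ ∑_i ℓ_i μ_i. Suppose there exist distinct points x⁰ achieving max_i ℓ_i and x₀ achieving min_i ℓ_i. Set R = 2(∑_i ℓ_i μ_i − D)/(max_i ℓ_i − min_i ℓ_i), and suppose μ(x⁰) ≥ R/2 and μ(x₀) + R/2 ≤ 1. Define ν* by ν*(x₀) = μ(x₀) + R/2, ν*(x⁰) = μ(x⁰) − R/2, ν* = μ elsewhere. Then ν* is a probability vector satisfying ∑_i ℓ_i ν*_i = D and ∑_i |ν*_i − μ_i| = R. -/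
theorem stmt_15 {S : Type*} [Fintype S] [Nonempty S] [DecidableEq S]
    (μ : S → ℝ) (hμ0 : ∀ i, 0 ≤ μ i) (hμ1 : ∑ i, μ i = 1)
    (ℓ : S → ℝ) (hℓ : ∀ i, 0 ≤ ℓ i)
    (hnc : (⨅ i, ℓ i) < ⨆ i, ℓ i)
    (D : ℝ) (hD1 : (⨅ i, ℓ i) ≤ D) (hD2 : D ≤ ∑ i, ℓ i * μ i)
    (x0 x1 : S) (hne : x1 ≠ x0)
    (hmax : ℓ x1 = ⨆ i, ℓ i) (hmin : ℓ x0 = ⨅ i, ℓ i)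
    (R : ℝ) (hR : R = 2 * (∑ i, ℓ i * μ i - D) / ((⨆ i, ℓ i) - ⨅ i, ℓ i))
    (h1 : R / 2 ≤ μ x1) (h0 : μ x0 + R / 2 ≤ 1)
    (ν : S → ℝ)
    (hν : ν = fun i => if i = x0 then μ x0 + R / 2
            else if i = x1 then μ x1 - R / 2 else μ i) :
    (∀ i, 0 ≤ ν i) ∧ (∑ i, ν i = 1) ∧
    (∑ i, ℓ i * ν i = D) ∧ (∑ i, |ν i - μ i| = R) := by
  have hAB : (0:ℝ) < (⨆ i, ℓ i) - ⨅ i, ℓ i := sub_pos.mpr hnc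
  have hRnn : 0 ≤ R := by
    rw [hR]; apply div_nonneg <;> linarith
  have hRhalf : ((⨆ i, ℓ i) - ⨅ i, ℓ i) * (R / 2) = ∑ i, ℓ i * μ i - D := by
    rw [hR]; field_simp
  have hd : ∀ i, ν i - μ i
      = (if i = x0 then R / 2 else 0) + (if i = x1 then -(R / 2) else 0) := by
    intro i
    rw [hν]
    dsimp only
    by_cases hi0 : i = x0
    · subst hi0
      rw [if_pos rfl, if_pos rfl, if_neg (Ne.symm hne)]
      ring
    · by_cases hi1 : i = x1
      · subst hi1
        rw [if_neg hi0, if_neg hi0, if_pos rfl, if_pos rfl]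
        ring
      · rw [if_neg hi0, if_neg hi0, if_neg hi1, if_neg hi1]
        ring
  have hsumd : ∑ i, (ν i - μ i) = 0 := by
    simp only [hd, Finset.sum_add_distrib, Finset.sum_ite_eq', Finset.mem_univ, if_true]
    ring
  have hsum : ∑ i, ν i = 1 := by
    rw [Finset.sum_sub_distrib, hμ1] at hsumd
    linarith
  have hℓd : ∑ i, ℓ i * (ν i - μ i) = D - ∑ i, ℓ i * μ i := by
    have key : ∀ i, ℓ i * (ν i - μ i)
        = (if i = x0 then ℓ x0 * (R / 2) else 0)
          + (if i = x1 then ℓ x1 * (-(R / 2)) else 0) := by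
      intro i
      rw [hd i]
      by_cases hi0 : i = x0
      · subst hi0
        rw [if_pos rfl, if_pos rfl, if_neg (Ne.symm hne), if_neg (Ne.symm hne)]
        ring
      · by_cases hi1 : i = x1
        · subst hi1
          rw [if_neg hi0, if_neg hi0, if_pos rfl, if_pos rfl]
          ring
        · rw [if_neg hi0, if_neg hi0, if_neg hi1, if_neg hi1]
          ring
    simp only [key, Finset.sum_add_distrib, Finset.sum_ite_eq', Finset.mem_univ, if_true]
    rw [hmax, hmin]
    nlinarith [hRhalf]
  refine ⟨?_, hsum, ?_, ?_⟩
  · intro i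
    rw [hν]
    dsimp only
    split_ifs with hi0 hi1
    · have := hμ0 x0; linarith
    · linarith [h1]
    · exact hμ0 i
  · have heq : ∑ i, (ℓ i * ν i - ℓ i * μ i) = D - ∑ i, ℓ i * μ i := by
      rw [← hℓd]; exact Finset.sum_congr rfl fun i _ => by ring
    rw [Finset.sum_sub_distrib] at heq
    linarith
  · have habs : ∀ i, |ν i - μ i|
        = (if i = x0 then R / 2 else 0) + (if i = x1 then R / 2 else 0) := by
      intro i
      rw [hd i]
      by_cases hi0 : i = x0
      · subst hi0
        rw [if_pos rfl, if_neg (Ne.symm hne), if_neg (Ne.symm hne),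
          add_zero, abs_of_nonneg (by linarith : (0:ℝ) ≤ R / 2)]
      · by_cases hi1 : i = x1
        · subst hi1
          rw [if_neg hi0, if_pos rfl, if_pos rfl, zero_add, zero_add,
            abs_neg, abs_of_nonneg (by linarith : (0:ℝ) ≤ R / 2)]
        · rw [if_neg hi0, if_neg hi1, if_neg hi1]
          simp
    simp only [habs, Finset.sum_add_distrib, Finset.sum_ite_eq', Finset.mem_univ, if_true]
    ring
end

section
/- Let Σ be a finite set, μ a probability vector, ℓ : Σ → ℝ≥0 non-constant. For any probability vector ν with ∑_i ℓ_i ν_i ≤ D where D ≤ ∑_i ℓ_i μ_i, we have ∑_i |ν_i − μ_i| ≥ 2(∑_i ℓ_i μ_i − D)/(max_i ℓ_i − min_i ℓ_i). -/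
theorem stmt_16 {S : Type*} [Fintype S] [Nonempty S]
    (μ : S → ℝ) (hμ0 : ∀ i, 0 ≤ μ i) (hμ1 : ∑ i, μ i = 1)
    (ℓ : S → ℝ) (hℓ : ∀ i, 0 ≤ ℓ i)
    (hnc : (⨅ i, ℓ i) < ⨆ i, ℓ i)
    (D : ℝ) (hD : D ≤ ∑ i, ℓ i * μ i)
    (ν : S → ℝ) (hν0 : ∀ i, 0 ≤ ν i) (hν1 : ∑ i, ν i = 1)
    (hνD : ∑ i, ℓ i * ν i ≤ D) :
    2 * (∑ i, ℓ i * μ i - D) / ((⨆ i, ℓ i) - ⨅ i, ℓ i) ≤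
      ∑ i, |ν i - μ i| := by
  set m := ⨅ i, ℓ i with hm
  set M := ⨆ i, ℓ i with hM
  have hmle : ∀ i, m ≤ ℓ i := fun i => ciInf_le (Set.Finite.bddBelow (Set.finite_range ℓ)) i
  have hleM : ∀ i, ℓ i ≤ M := fun i => le_ciSup (Set.Finite.bddAbove (Set.finite_range ℓ)) i
  have hd0 : ∑ i, (ν i - μ i) = 0 := by
    rw [Finset.sum_sub_distrib, hμ1, hν1]; ring
  have key : ∀ i, m * ((|ν i - μ i| + (ν i - μ i)) / 2)
      - M * ((|ν i - μ i| - (ν i - μ i)) / 2) ≤ ℓ i * (ν i - μ i) := by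
    intro i
    have h1 : 0 ≤ (|ν i - μ i| + (ν i - μ i)) / 2 := by
      have := neg_abs_le (ν i - μ i); linarith
    have h2 : 0 ≤ (|ν i - μ i| - (ν i - μ i)) / 2 := by
      have := le_abs_self (ν i - μ i); linarith
    have e1 : m * ((|ν i - μ i| + (ν i - μ i)) / 2) ≤ ℓ i * ((|ν i - μ i| + (ν i - μ i)) / 2) :=
      mul_le_mul_of_nonneg_right (hmle i) h1
    have e2 : ℓ i * ((|ν i - μ i| - (ν i - μ i)) / 2) ≤ M * ((|ν i - μ i| - (ν i - μ i)) / 2) :=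
      mul_le_mul_of_nonneg_right (hleM i) h2
    nlinarith
  have hsum : (m - M) * (∑ i, |ν i - μ i|) / 2 ≤ ∑ i, ℓ i * (ν i - μ i) := by
    calc (m - M) * (∑ i, |ν i - μ i|) / 2
        = ∑ i, (m * ((|ν i - μ i| + (ν i - μ i)) / 2)
            - M * ((|ν i - μ i| - (ν i - μ i)) / 2)) := by
          rw [Finset.sum_sub_distrib, ← Finset.mul_sum, ← Finset.mul_sum,
            ← Finset.sum_div, ← Finset.sum_div, Finset.sum_add_distrib,
            Finset.sum_sub_distrib, Finset.sum_sub_distrib, hν1, hμ1, hd0]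
          ring
      _ ≤ ∑ i, ℓ i * (ν i - μ i) := Finset.sum_le_sum fun i _ => key i
  have hsplit : ∑ i, ℓ i * (ν i - μ i) = (∑ i, ℓ i * ν i) - ∑ i, ℓ i * μ i := by
    rw [← Finset.sum_sub_distrib]; congr 1; ext i; ring
  have hpos : 0 < M - m := by linarith
  rw [div_le_iff₀ hpos]
  nlinarith [hsum, hsplit]
end

section
/- Let Σ be a finite set, μ a probability vector, ℓ : Σ → ℝ≥0, R ∈ [0,2], and define D⁺(R) = max{∑_i ℓ_i ν_i : ν probability vector, ∑_i |ν_i − μ_i| ≤ R}. Let R_max = 2(1 − μ(Σ⁰)) where Σ⁰ is the argmax set of ℓ. Then for R ≤ R_max, D⁺(R) = max{∑_i ℓ_i ν_i : ν probability vector, ∑_i |ν_i − μ_i| = R}, i.e., the maximum over the ball equals the maximum over the sphere. -/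
theorem stmt_19 {S : Type*} [Fintype S] [Nonempty S]
    (μ : S → ℝ) (hμ0 : ∀ i, 0 ≤ μ i) (hμ1 : ∑ i, μ i = 1)
    (ℓ : S → ℝ) (hℓ : ∀ i, 0 ≤ ℓ i)
    (R : ℝ) (hR0 : 0 ≤ R) (hR2 : R ≤ 2)
    (hRmax : R ≤ 2 * (1 - ∑ i ∈ Finset.univ.filter (fun i => ℓ i = ⨆ j, ℓ j), μ i)) :
    sSup {y : ℝ | ∃ ν : S → ℝ, (∀ i, 0 ≤ ν i) ∧ (∑ i, ν i = 1) ∧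
        (∑ i, |ν i - μ i|) ≤ R ∧ y = ∑ i, ℓ i * ν i} =
    sSup {y : ℝ | ∃ ν : S → ℝ, (∀ i, 0 ≤ ν i) ∧ (∑ i, ν i = 1) ∧
        (∑ i, |ν i - μ i|) = R ∧ y = ∑ i, ℓ i * ν i} := by
  classical
  set M := ⨆ j, ℓ j with hM
  obtain ⟨a, ha⟩ : ∃ a, ℓ a = M := exists_eq_ciSup_of_finite
  set T := Finset.univ.filter (fun i => ℓ i = M) with hT
  set c := ∑ i ∈ T, μ i with hc
  have hc1 : c ≤ 1 := by
    rw [hc, ← hμ1]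
    exact Finset.sum_le_sum_of_subset_of_nonneg (Finset.subset_univ T)
      (fun i _ _ => hμ0 i)
  have hℓM : ∀ i, ℓ i ≤ M := fun i =>
    le_ciSup (Set.Finite.bddAbove (Set.finite_range ℓ)) i
  -- the extreme distribution w: all off-argmax mass moved to a
  set w : S → ℝ := fun i =>
    (if ℓ i = M then μ i else 0) + (if i = a then (1 - c) else 0) with hw
  have hw0 : ∀ i, 0 ≤ w i := by
    intro i
    simp only [hw]
    split_ifs <;> linarith [hμ0 i]
  have hwsum : ∑ i, w i = 1 := by
    rw [hw, Finset.sum_add_distrib]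
    rw [Finset.sum_ite_eq' Finset.univ a (fun _ => 1 - c), if_pos (Finset.mem_univ a)]
    have : ∑ i, (if ℓ i = M then μ i else 0) = c := by
      rw [hc, hT, Finset.sum_filter]
    rw [this]; ring
  have hwabs : ∀ i, |w i - μ i| =
      (if i = a then (1 - c) else 0) + (if ℓ i = M then 0 else μ i) := by
    intro i
    by_cases hia : i = a
    · have hiM : ℓ i = M := by rw [hia]; exact ha
      have h1 : w i - μ i = 1 - c := by simp [hw, hia, ha]
      rw [h1, if_pos hia, if_pos hiM, abs_of_nonneg (by linarith)]
      ring
    · by_cases hiM : ℓ i = M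
      · have h1 : w i - μ i = 0 := by simp [hw, hiM, hia]
        rw [h1, if_neg hia, if_pos hiM, abs_zero]
        ring
      · have h1 : w i - μ i = -μ i := by simp [hw, hiM, hia]
        rw [h1, if_neg hia, if_neg hiM, abs_neg, abs_of_nonneg (hμ0 i)]
        ring
  have hwdist : ∑ i, |w i - μ i| = 2 * (1 - c) := by
    rw [Finset.sum_congr rfl (fun i _ => hwabs i), Finset.sum_add_distrib]
    rw [Finset.sum_ite_eq' Finset.univ a (fun _ => 1 - c), if_pos (Finset.mem_univ a)]
    have h1 : ∑ i, (if ℓ i = M then 0 else μ i) = 1 - c := by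
      have key := Finset.sum_filter_add_sum_filter_not Finset.univ (fun i => ℓ i = M) μ
      rw [hμ1] at key
      have e1 : ∑ i, (if ℓ i = M then 0 else μ i)
          = ∑ i ∈ Finset.univ.filter (fun i => ¬ ℓ i = M), μ i := by
        rw [Finset.sum_filter]
        exact Finset.sum_congr rfl (fun i _ => by by_cases h : ℓ i = M <;> simp [h])
      rw [e1, hc, hT]
      linarith
    rw [h1]; ring
  have hwval : ∑ i, ℓ i * w i = M := by
    have : ∀ i, ℓ i * w i = M * w i := by
      intro i
      by_cases hiM : ℓ i = M
      · rw [hiM]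
      · have hia : i ≠ a := fun h => hiM (h ▸ ha)
        have : w i = 0 := by simp [hw, hiM, hia]
        rw [this]; ring
    rw [Finset.sum_congr rfl (fun i _ => this i), ← Finset.mul_sum, hwsum, mul_one]
  have hvalM : ∀ ν : S → ℝ, (∀ i, 0 ≤ ν i) → ∑ i, ν i = 1 → ∑ i, ℓ i * ν i ≤ M := by
    intro ν hν0 hν1
    calc ∑ i, ℓ i * ν i ≤ ∑ i, M * ν i :=
          Finset.sum_le_sum (fun i _ => mul_le_mul_of_nonneg_right (hℓM i) (hν0 i))
      _ = M := by rw [← Finset.mul_sum, hν1, mul_one]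
  have hRmax' : R ≤ 2 * (1 - c) := hRmax
  -- key: every ball point is dominated by a sphere point
  have key : ∀ ν : S → ℝ, (∀ i, 0 ≤ ν i) → ∑ i, ν i = 1 → ∑ i, |ν i - μ i| ≤ R →
      ∃ ν' : S → ℝ, (∀ i, 0 ≤ ν' i) ∧ ∑ i, ν' i = 1 ∧ ∑ i, |ν' i - μ i| = R ∧
        ∑ i, ℓ i * ν i ≤ ∑ i, ℓ i * ν' i := by
    intro ν hν0 hν1 hνd
    set g : ℝ → ℝ := fun t => ∑ i, |ν i + t * (w i - ν i) - μ i| with hg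
    have hgc : Continuous g := by
      apply continuous_finset_sum
      intro i _
      fun_prop
    have hg0 : g 0 = ∑ i, |ν i - μ i| := by simp [hg]
    have hg1 : g 1 = 2 * (1 - c) := by
      rw [← hwdist, hg]
      exact Finset.sum_congr rfl (fun i _ => by ring_nf)
    have hmem : R ∈ Set.Icc (g 0) (g 1) := by
      rw [hg0, hg1]; exact ⟨hνd, hRmax'⟩
    obtain ⟨t, ht01, htR⟩ := intermediate_value_Icc (zero_le_one) hgc.continuousOn hmem
    obtain ⟨ht0, ht1⟩ := ht01
    refine ⟨fun i => ν i + t * (w i - ν i), ?_, ?_, htR, ?_⟩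
    · intro i
      show 0 ≤ ν i + t * (w i - ν i)
      nlinarith [mul_nonneg (sub_nonneg.2 ht1) (hν0 i), mul_nonneg ht0 (hw0 i)]
    · have : ∑ i, (ν i + t * (w i - ν i)) =
          ∑ i, ν i + t * (∑ i, w i - ∑ i, ν i) := by
        rw [Finset.sum_add_distrib, ← Finset.mul_sum, Finset.sum_sub_distrib]
      rw [this, hν1, hwsum]; ring
    · have hexp : ∑ i, ℓ i * (ν i + t * (w i - ν i)) =
          ∑ i, ℓ i * ν i + t * (∑ i, ℓ i * w i - ∑ i, ℓ i * ν i) := by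
        rw [← Finset.sum_sub_distrib, Finset.mul_sum, ← Finset.sum_add_distrib]
        exact Finset.sum_congr rfl (fun i _ => by ring)
      rw [hexp, hwval]
      have := hvalM ν hν0 hν1
      nlinarith
  -- assemble
  set A := {y : ℝ | ∃ ν : S → ℝ, (∀ i, 0 ≤ ν i) ∧ (∑ i, ν i = 1) ∧
      (∑ i, |ν i - μ i|) ≤ R ∧ y = ∑ i, ℓ i * ν i} with hA
  set B := {y : ℝ | ∃ ν : S → ℝ, (∀ i, 0 ≤ ν i) ∧ (∑ i, ν i = 1) ∧
      (∑ i, |ν i - μ i|) = R ∧ y = ∑ i, ℓ i * ν i} with hB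
  have hBA : B ⊆ A := by
    rintro y ⟨ν, h1, h2, h3, h4⟩
    exact ⟨ν, h1, h2, le_of_eq h3, h4⟩
  have hbddA : BddAbove A := by
    refine ⟨M, ?_⟩
    rintro y ⟨ν, h1, h2, _, h4⟩
    rw [h4]; exact hvalM ν h1 h2
  have hμball : ∑ i, |μ i - μ i| ≤ R := by simpa using hR0
  have hAne : A.Nonempty := ⟨∑ i, ℓ i * μ i, μ, hμ0, hμ1, hμball, rfl⟩
  have hBne : B.Nonempty := by
    obtain ⟨ν', p1, p2, p3, _⟩ := key μ hμ0 hμ1 hμball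
    exact ⟨∑ i, ℓ i * ν' i, ν', p1, p2, p3, rfl⟩
  apply le_antisymm
  · apply csSup_le hAne
    rintro y ⟨ν, h1, h2, h3, h4⟩
    obtain ⟨ν', p1, p2, p3, p4⟩ := key ν h1 h2 h3
    have : (∑ i, ℓ i * ν' i) ∈ B := ⟨ν', p1, p2, p3, rfl⟩
    calc y = ∑ i, ℓ i * ν i := h4
      _ ≤ ∑ i, ℓ i * ν' i := p4
      _ ≤ sSup B := le_csSup (hbddA.mono hBA) this
  · exact csSup_le_csSup hbddA hBne hBA
end
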